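/- Fix j ∈ N. Then conv(B_j^≥) = {(x_j, y₀, y) : x_j ∈ [0,1], (y₀,y) ∈ Y, and Under(j,S) holds for every S ⊆ N\{j}}. -/

import Mathlib

private lemma sum_lin {n : ℕ} (s : Finset (Fin n)) (w f g : Fin n → ℝ) (a b : ℝ) :
    ∑ t ∈ s, w t * (a * f t + b * g t)
      = a * ∑ t ∈ s, w t * f t + b * ∑ t ∈ s, w t * g t := by
  rw [Finset.mul_sum, Finset.mul_sum, ← Finset.sum_add_distrib]
  exact Finset.sum_congr rfl fun t _ => by ring

/-- The `Under(j,S)` inequalities describe `conv(B_j^≥)`. -/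
theorem stmt13 (n : ℕ) (hn : 1 ≤ n) (u0 : ℝ) (hu0 : 0 < u0)
    (u : Fin n → ℝ) (hu : ∀ t, 0 ≤ u t) (j : Fin n) :
    convexHull ℝ {p : ℝ × ℝ × (Fin n → ℝ) |
        (p.1 = 0 ∨ p.1 = 1) ∧
        (u0 * p.2.1 + ∑ t, u t * p.2.2 t = 1 ∧ ∀ t, 0 ≤ p.2.2 t ∧ p.2.2 t ≤ p.2.1) ∧
        p.2.1 * p.1 ≤ p.2.2 j} =
      {p : ℝ × ℝ × (Fin n → ℝ) |
        (0 ≤ p.1 ∧ p.1 ≤ 1) ∧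
        (u0 * p.2.1 + ∑ t, u t * p.2.2 t = 1 ∧ ∀ t, 0 ≤ p.2.2 t ∧ p.2.2 t ≤ p.2.1) ∧
        ∀ S : Finset (Fin n), j ∉ S →
          (u0 + ∑ t ∈ insert j S, u t)⁻¹ * p.1 -
              ∑ t ∈ Finset.univ \ insert j S, u t * (u0 + ∑ s ∈ insert j S, u s)⁻¹ * p.2.2 t
            ≤ p.2.2 j} := by
  apply Set.Subset.antisymm
  · apply convexHull_min
    · rintro ⟨x, y0, y⟩ ⟨hx01, ⟨hEq, hbd⟩, hxj⟩
      simp only [Set.mem_setOf_eq] at *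
      have hUpos : ∀ S : Finset (Fin n), (0:ℝ) < u0 + ∑ t ∈ S, u t := fun S =>
        add_pos_of_pos_of_nonneg hu0 (Finset.sum_nonneg fun t _ => hu t)
      refine ⟨by rcases hx01 with h | h <;> simp [h], ⟨hEq, hbd⟩, fun S hjS => ?_⟩
      set U : ℝ := u0 + ∑ t ∈ insert j S, u t with hU
      have hUpos' := hUpos (insert j S)
      have hTrw : ∑ t ∈ Finset.univ \ insert j S, u t * U⁻¹ * y t
          = U⁻¹ * ∑ t ∈ Finset.univ \ insert j S, u t * y t := by
        rw [Finset.mul_sum]; exact Finset.sum_congr rfl fun t _ => by ring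
      rw [hTrw]
      set T : ℝ := ∑ t ∈ Finset.univ \ insert j S, u t * y t with hT
      have hTnn : 0 ≤ T := Finset.sum_nonneg fun t _ => mul_nonneg (hu t) (hbd t).1
      rcases hx01 with h | h
      · rw [h]
        have : 0 ≤ U⁻¹ * T := mul_nonneg (inv_nonneg.mpr hUpos'.le) hTnn
        have := (hbd j).1
        linarith
      · rw [h] at hxj ⊢
        rw [mul_one] at hxj
        -- 1 - T = u0*y0 + ∑_{ins} u t * y t ≤ U * y0
        have hsplit : T + ∑ t ∈ insert j S, u t * y t = ∑ t, u t * y t :=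
          Finset.sum_sdiff (Finset.subset_univ _)
        have h2 : ∑ t ∈ insert j S, u t * y t ≤ (∑ t ∈ insert j S, u t) * y0 := by
          rw [Finset.sum_mul]
          exact Finset.sum_le_sum fun t _ => mul_le_mul_of_nonneg_left (hbd t).2 (hu t)
        have h3 : 1 - T ≤ U * y0 := by
          rw [hU]; nlinarith
        have h4 : U⁻¹ * (1 - T) ≤ y0 := by
          rw [← mul_le_mul_iff_right₀ hUpos', ← mul_assoc, mul_inv_cancel₀ hUpos'.ne', one_mul]
          nlinarith
        nlinarith
    · -- convexity
      rintro ⟨x, y0, y⟩ hp ⟨x', y0', y'⟩ hq a b ha hb hab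
      simp only [Set.mem_setOf_eq, Prod.smul_fst, Prod.smul_snd, Prod.fst_add, Prod.snd_add,
        Pi.add_apply, Pi.smul_apply, smul_eq_mul] at *
      obtain ⟨⟨hx0, hx1⟩, ⟨hEq, hbd⟩, hund⟩ := hp
      obtain ⟨⟨hx0', hx1'⟩, ⟨hEq', hbd'⟩, hund'⟩ := hq
      refine ⟨⟨by positivity, by nlinarith⟩, ⟨?_, fun t => ⟨?_, ?_⟩⟩, fun S hjS => ?_⟩
      · rw [sum_lin]; nlinarith
      · have := (hbd t).1; have := (hbd' t).1; positivity
      · have := (hbd t).2; have := (hbd' t).2; nlinarith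
      · have h1 := hund S hjS
        have h2 := hund' S hjS
        have hs : ∑ t ∈ Finset.univ \ insert j S,
            u t * (u0 + ∑ s ∈ insert j S, u s)⁻¹ * (a * y t + b * y' t)
            = a * ∑ t ∈ Finset.univ \ insert j S, u t * (u0 + ∑ s ∈ insert j S, u s)⁻¹ * y t
              + b * ∑ t ∈ Finset.univ \ insert j S, u t * (u0 + ∑ s ∈ insert j S, u s)⁻¹ * y' t := by
          rw [Finset.mul_sum, Finset.mul_sum, ← Finset.sum_add_distrib]
          exact Finset.sum_congr rfl fun t _ => by ring
        rw [hs]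
        nlinarith
  · set B := {p : ℝ × ℝ × (Fin n → ℝ) |
          (p.1 = 0 ∨ p.1 = 1) ∧
          (u0 * p.2.1 + ∑ t, u t * p.2.2 t = 1 ∧ ∀ t, 0 ≤ p.2.2 t ∧ p.2.2 t ≤ p.2.1) ∧
          p.2.1 * p.1 ≤ p.2.2 j} with hBdef
    rintro ⟨x, y0, y⟩ ⟨⟨hx0, hx1⟩, ⟨hEq, hbd⟩, hund⟩
    dsimp only at hx0 hx1 hund hEq hbd
    -- key inequality
    have hkey : x ≤ u0 * y j + ∑ t, u t * min (y t) (y j) := by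
      set S : Finset (Fin n) := Finset.univ.filter (fun t => y j < y t) with hS
      have hjS : j ∉ S := by simp [hS]
      have h := hund S hjS
      set U : ℝ := u0 + ∑ t ∈ insert j S, u t with hU
      have hUpos : 0 < U := add_pos_of_pos_of_nonneg hu0 (Finset.sum_nonneg fun t _ => hu t)
      have hTrw : ∑ t ∈ Finset.univ \ insert j S, u t * U⁻¹ * y t
          = U⁻¹ * ∑ t ∈ Finset.univ \ insert j S, u t * y t := by
        rw [Finset.mul_sum]; exact Finset.sum_congr rfl fun t _ => by ring
      rw [hTrw] at h
      set T : ℝ := ∑ t ∈ Finset.univ \ insert j S, u t * y t with hT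
      have h2 : x - T ≤ U * y j := by
        have e : x - T = U * (U⁻¹ * x - U⁻¹ * T) := by
          rw [mul_sub, ← mul_assoc, ← mul_assoc, mul_inv_cancel₀ hUpos.ne', one_mul, one_mul]
        rw [e]
        exact mul_le_mul_of_nonneg_left h hUpos.le
      have hsplit : (∑ t ∈ Finset.univ \ insert j S, u t * min (y t) (y j))
          + ∑ t ∈ insert j S, u t * min (y t) (y j) = ∑ t, u t * min (y t) (y j) :=
        Finset.sum_sdiff (Finset.subset_univ _)
      have hA : ∑ t ∈ insert j S, u t * min (y t) (y j) = (∑ t ∈ insert j S, u t) * y j := by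
        rw [Finset.sum_mul]
        refine Finset.sum_congr rfl fun t ht => ?_
        rcases Finset.mem_insert.mp ht with rfl | ht
        · rw [min_self]
        · rw [min_eq_right (le_of_lt (by simpa [hS] using ht))]
      have hBt : ∑ t ∈ Finset.univ \ insert j S, u t * min (y t) (y j) = T := by
        rw [hT]
        refine Finset.sum_congr rfl fun t ht => ?_
        have ht' : ¬ y j < y t := by
          simp only [hS, Finset.mem_sdiff, Finset.mem_insert, Finset.mem_filter,
            Finset.mem_univ, true_and] at ht
          tauto
        rw [min_eq_left (not_lt.mp ht')]
      have h5 : U * y j = u0 * y j + (∑ t ∈ insert j S, u t) * y j := by rw [hU]; ring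
      linarith [hsplit, hA, hBt, h2, h5]
    rcases eq_or_lt_of_le hx0 with h0 | h0
    · refine subset_convexHull ℝ B ⟨Or.inl h0.symm, ⟨hEq, hbd⟩, ?_⟩
      show y0 * x ≤ y j
      rw [← h0, mul_zero]; exact (hbd j).1
    rcases eq_or_lt_of_le hx1 with h1 | h1
    · -- x = 1
      have hle : ∑ t, u t * min (y t) (y j) ≤ ∑ t, u t * y t :=
        Finset.sum_le_sum fun t _ => mul_le_mul_of_nonneg_left (min_le_left _ _) (hu t)
      have hyj : y0 ≤ y j := by
        have : u0 * y0 ≤ u0 * y j := by rw [h1] at hkey; linarith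
        exact (mul_le_mul_iff_right₀ hu0).mp this
      refine subset_convexHull ℝ B ⟨Or.inr h1, ⟨hEq, hbd⟩, ?_⟩
      show y0 * x ≤ y j
      rw [h1, mul_one]; exact hyj
    · -- 0 < x < 1
      have hyj0 : (0:ℝ) ≤ y j := (hbd j).1
      set g : ℝ → ℝ := fun m => u0 * m + ∑ t, u t * min (y t) m with hgdef
      have hg0 : g 0 = 0 := by
        have hmin : ∀ t, min (y t) 0 = (0:ℝ) := fun t => min_eq_right (hbd t).1
        simp [hgdef, hmin]
      have hgc : ContinuousOn g (Set.Icc 0 (y j)) := by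
        apply Continuous.continuousOn
        exact (continuous_const.mul continuous_id).add
          (continuous_finset_sum _ fun t _ => continuous_const.mul
            (continuous_const.min continuous_id))
      have hmem : x ∈ Set.Icc (g 0) (g (y j)) := ⟨by rw [hg0]; exact h0.le, hkey⟩
      obtain ⟨m, hmIcc, hgm⟩ := intermediate_value_Icc hyj0 hgc hmem
      obtain ⟨hm0, hmyj⟩ := hmIcc
      have hx' : (0:ℝ) < 1 - x := by linarith
      have hmy0 : m ≤ y0 := le_trans hmyj (hbd j).2
      have hgm' : u0 * m + ∑ t, u t * min (y t) m = x := hgm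
      set p1 : ℝ × ℝ × (Fin n → ℝ) := (1, m / x, fun t => min (y t) m / x) with hp1def
      set p0 : ℝ × ℝ × (Fin n → ℝ) :=
        (0, (y0 - m) / (1 - x), fun t => (y t - min (y t) m) / (1 - x)) with hp0def
      have h1B : p1 ∈ B := by
        refine ⟨Or.inr rfl, ⟨?_, fun t => ⟨?_, ?_⟩⟩, ?_⟩
        · show u0 * (m / x) + ∑ t, u t * (min (y t) m / x) = 1
          have hsum : ∑ t, u t * (min (y t) m / x) = (∑ t, u t * min (y t) m) / x := by
            rw [Finset.sum_div]; exact Finset.sum_congr rfl fun t _ => (mul_div_assoc _ _ _).symm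
          rw [hsum]
          field_simp
          linarith
        · exact div_nonneg (le_min (hbd t).1 hm0) h0.le
        · exact (div_le_div_iff_of_pos_right h0).mpr (min_le_right _ _)
        · show (m / x) * 1 ≤ min (y j) m / x
          rw [min_eq_right hmyj, mul_one]
      have h0B : p0 ∈ B := by
        refine ⟨Or.inl rfl, ⟨?_, fun t => ⟨?_, ?_⟩⟩, ?_⟩
        · show u0 * ((y0 - m) / (1 - x)) + ∑ t, u t * ((y t - min (y t) m) / (1 - x)) = 1
          have hsum : ∑ t, u t * ((y t - min (y t) m) / (1 - x))
              = ((∑ t, u t * y t) - ∑ t, u t * min (y t) m) / (1 - x) := by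
            rw [← Finset.sum_sub_distrib, Finset.sum_div]
            exact Finset.sum_congr rfl fun t _ => by ring
          rw [hsum]
          field_simp
          linarith
        · exact div_nonneg (by linarith [min_le_left (y t) m]) hx'.le
        · apply (div_le_div_iff_of_pos_right hx').mpr
          rcases le_total (y t) m with h | h
          · rw [min_eq_left h]; linarith
          · rw [min_eq_right h]; linarith [(hbd t).2]
        · show ((y0 - m) / (1 - x)) * 0 ≤ (y j - min (y j) m) / (1 - x)
          rw [mul_zero]
          exact div_nonneg (by linarith [min_le_left (y j) m]) hx'.le
      have hcomb := (convex_convexHull ℝ B) (subset_convexHull ℝ B h1B)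
        (subset_convexHull ℝ B h0B) h0.le hx'.le (by ring)
      have heq : (⟨x, y0, y⟩ : ℝ × ℝ × (Fin n → ℝ)) = x • p1 + (1 - x) • p0 := by
        have hx0' : x ≠ 0 := h0.ne'
        have hx1' : (1:ℝ) - x ≠ 0 := hx'.ne'
        refine Prod.ext ?_ (Prod.ext ?_ ?_)
        · simp [hp1def, hp0def]
        · show y0 = x * (m / x) + (1 - x) * ((y0 - m) / (1 - x))
          field_simp
          ring
        · funext t
          show y t = x * (min (y t) m / x) + (1 - x) * ((y t - min (y t) m) / (1 - x))
          field_simp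
          ring
      rw [heq]
      exact hcomb
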